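/- Let G be a finite abelian group, X ⊆ G nonempty, z ∈ X fixed, and g : G → ℝ. Suppose that ||g(· + t) − g||_∞ ≤ ε for every t ∈ kT − kT where T = X. Then for X' = X − z, ||g − g * μ_{X'}^{(k)}||_∞ ≤ ε. -/

import Mathlib

open scoped Classical BigOperators Pointwise

variable {G : Type*} [AddCommGroup G] [Fintype G]

/-- The Bohr set `Bohr(Γ, ρ) = {x : |1 - γ(x)| ≤ ρ for all γ ∈ Γ}`. -/
noncomputable def bohr (Γ : Finset (AddChar G ℂ)) (ρ : ℝ) : Finset G :=
  Finset.univ.filter fun x => ∀ γ ∈ Γ, ‖1 - γ x‖ ≤ ρ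

/-- Regularity of the Bohr set `Bohr(Γ, ρ)` (dimension `d = Γ.card`). -/
noncomputable def BohrRegular (Γ : Finset (AddChar G ℂ)) (ρ : ℝ) : Prop :=
  ∀ δ : ℝ, |δ| ≤ 1 / (12 * Γ.card) →
    (1 - 12 * Γ.card * |δ|) * (bohr Γ ρ).card ≤ ((bohr Γ (ρ * (1 + δ))).card : ℝ) ∧
    ((bohr Γ (ρ * (1 + δ))).card : ℝ) ≤ (1 + 12 * Γ.card * |δ|) * (bohr Γ ρ).card

/-- Indicator function of a finite set. -/
noncomputable def ind (A : Finset G) : G → ℝ := fun x => if x ∈ A then 1 else 0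

/-- Normalized indicator `μ_A = 1_A / |A|`. -/
noncomputable def mu (A : Finset G) : G → ℝ := fun x => (if x ∈ A then 1 else 0) / A.card

/-- Convolution `(f * g)(x) = ∑ t, f t * g (x - t)`. -/
noncomputable def conv (f g : G → ℝ) : G → ℝ := fun x => ∑ t, f t * g (x - t)

/-- `L¹` norm. -/
noncomputable def l1 (f : G → ℝ) : ℝ := ∑ x, |f x|

/-- `k`-fold self-convolution `f^{(k)}` (with `f^{(0)}` the Dirac delta at `0`). -/
noncomputable def convPow (f : G → ℝ) : ℕ → G → ℝ
  | 0 => fun x => if x = 0 then 1 else 0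
  | n + 1 => conv f (convPow f n)

section AuxLemmas
variable {G : Type*} [AddCommGroup G] [Fintype G]
variable {G : Type*} [AddCommGroup G] [Fintype G]

lemma mu_nonneg (A : Finset G) (x : G) : 0 ≤ mu A x := by
  unfold mu; positivity

lemma mu_sum (A : Finset G) (hA : A.Nonempty) : ∑ x, mu A x = 1 := by
  unfold mu
  rw [← Finset.sum_div, Finset.sum_ite_mem, Finset.univ_inter, Finset.sum_const, nsmul_eq_mul, mul_one]
  have : (A.card : ℝ) ≠ 0 := Nat.cast_ne_zero.2 (Finset.card_ne_zero_of_mem hA.choose_spec)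
  field_simp

lemma convPow_nonneg (A : Finset G) (n : ℕ) (x : G) : 0 ≤ convPow (mu A) n x := by
  induction n generalizing x with
  | zero => unfold convPow; positivity
  | succ n ih =>
    unfold convPow conv
    exact Finset.sum_nonneg fun t _ => mul_nonneg (mu_nonneg A t) (ih _)

lemma convPow_sum (A : Finset G) (hA : A.Nonempty) (n : ℕ) : ∑ x, convPow (mu A) n x = 1 := by
  induction n with
  | zero => simp [convPow]
  | succ n ih =>
    unfold convPow conv
    rw [Finset.sum_comm]
    have : ∀ t : G, ∑ x : G, mu A t * convPow (mu A) n (x - t) = mu A t := by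
      intro t
      rw [← Finset.mul_sum]
      rw [Fintype.sum_equiv (Equiv.subRight t) (fun i => convPow (mu A) n (i - t)) (fun x => convPow (mu A) n x) (fun x => rfl), ih, mul_one]
    simp_rw [this]
    exact mu_sum A hA

lemma convPow_support (A : Finset G) (n : ℕ) (t : G) (h : convPow (mu A) n t ≠ 0) :
    ∃ a : Fin n → G, (∀ i, a i ∈ A) ∧ t = ∑ i, a i := by
  induction n generalizing t with
  | zero =>
    refine ⟨fun i => i.elim0, fun i => i.elim0, ?_⟩
    simp [convPow] at h
    simp [h]
  | succ n ih =>
    unfold convPow conv at h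
    obtain ⟨s, -, hs⟩ := Finset.exists_ne_zero_of_sum_ne_zero h
    have hsA : s ∈ A := by
      by_contra hc
      simp [mu, hc] at hs
    have h2 : convPow (mu A) n (t - s) ≠ 0 := fun hc => hs (by simp [hc])
    obtain ⟨a, ha, hta⟩ := ih _ h2
    refine ⟨Fin.cons s a, ?_, ?_⟩
    · intro i
      refine Fin.cases hsA (fun j => ha j) i
    · rw [Fin.sum_cons, ← hta]; abel
end AuxLemmas
/-- if `‖g(·+t) - g‖_∞ ≤ ε` for every `t ∈ kX - kX`, then
`‖g - g * μ_{X-z}^{(k)}‖_∞ ≤ ε` for any fixed `z ∈ X`. -/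
theorem conv_smoothing_of_periods {G : Type*} [AddCommGroup G] [Fintype G]
    (k : ℕ) (ε : ℝ) (X : Finset G) (hX : X.Nonempty) (z : G) (hz : z ∈ X) (g : G → ℝ)
    (hper : ∀ t : G, (∃ a b : Fin k → G, (∀ i, a i ∈ X) ∧ (∀ i, b i ∈ X) ∧
        t = (∑ i, a i) - ∑ i, b i) → ∀ x, |g (x + t) - g x| ≤ ε) :
    ∀ x, |g x - conv g (convPow (mu (X.image (fun a => a - z))) k) x| ≤ ε := by
  intro x
  set X' := X.image (fun a => a - z) with hX'def
  set P := convPow (mu X') k with hPdef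
  have hX' : X'.Nonempty := hX.image _
  have hP0 : ∀ t, 0 ≤ P t := convPow_nonneg X' k
  have hP1 : ∑ t, P t = 1 := convPow_sum X' hX' k
  have hconv : conv g P x = ∑ u, P u * g (x - u) := by
    unfold conv
    exact Fintype.sum_equiv (Equiv.subLeft x) (fun t => g t * P (x - t))
      (fun u => P u * g (x - u)) (fun u => by simp [Equiv.subLeft, mul_comm])
  have key : g x - conv g P x = ∑ u, P u * (g x - g (x - u)) := by
    rw [hconv]
    simp_rw [mul_sub]
    rw [Finset.sum_sub_distrib, ← Finset.sum_mul, hP1, one_mul]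
  rw [key]
  calc |∑ u, P u * (g x - g (x - u))| ≤ ∑ u, |P u * (g x - g (x - u))| :=
        Finset.abs_sum_le_sum_abs _ _
    _ ≤ ∑ u, P u * ε := by
        refine Finset.sum_le_sum fun u _ => ?_
        rw [abs_mul, abs_of_nonneg (hP0 u)]
        rcases eq_or_ne (P u) 0 with h0 | h0
        · simp [h0]
        · refine mul_le_mul_of_nonneg_left ?_ (hP0 u)
          obtain ⟨a, ha, hu⟩ := convPow_support X' k u h0
          have hc : ∀ i, ∃ c ∈ X, c - z = a i := by
            intro i
            exact Finset.mem_image.1 (ha i)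
          choose c hcX hcz using hc
          have hu' : u = (∑ i, c i) - ∑ _i : Fin k, z := by
            rw [hu, ← Finset.sum_sub_distrib]
            exact Finset.sum_congr rfl fun i _ => (hcz i).symm
          have := hper u ⟨c, fun _ => z, hcX, fun _ => hz, hu'⟩ (x - u)
          rwa [sub_add_cancel] at this
    _ = ε := by rw [← Finset.sum_mul, hP1, one_mul]
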